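/- Let Q' = (q₂,…,q_m, w₀q₁w₀) be the jumping word of Q_c and σ : [m] → [m] the cyclic shift with σ(i) = i−1 for i ≥ 2 and σ(1) = m. Let I be a c-cluster of Q_c, I' := σ(I), and for k ∈ [m] set k' := σ(k). Writing r' for the root function computed in the word Q', one has: r'(I',k') = −r(I,k) if k = 1 and 1 ∈ I; r'(I',k') = r(I,k) if k = 1 and 1 ∉ I; r'(I',k') = r(I,k) if k ≠ 1 and 1 ∈ I; and r'(I',k') = q₁·r(I,k) if k ≠ 1 and 1 ∉ I. -/

import Mathlib

open scoped Classical
set_option linter.unusedSectionVars false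
set_option linter.unusedVariables false
set_option maxHeartbeats 1600000

noncomputable section

namespace CP

variable {B : Type} [DecidableEq B] [Fintype B] [Nonempty B]
variable {W : Type} [Group W]

/-- An arbitrary element of `B`, used as a junk value for `List.getD`. -/
def arb (B : Type) [Nonempty B] : B := Classical.arbitrary B

/-- The bilinear form of the standard geometric representation of a Coxeter system:
`⟨αᵢ, αⱼ⟩ = -cos (π / Mᵢⱼ)`, extended bilinearly. -/
def bil (M : CoxeterMatrix B) (u v : B → ℝ) : ℝ :=
  ∑ i, ∑ j, u i * v j * (-(Real.cos (Real.pi / (M i j))))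

/-- The simple roots: the standard basis vectors of `V = ℝ^B`. -/
def sroot (i : B) : B → ℝ := Pi.single i 1

/-- The root system: the orbit of the simple roots under `W`. -/
def rootSystem (π : Representation ℝ W (B → ℝ)) : Set (B → ℝ) :=
  {v | ∃ (w : W) (i : B), v = π w (sroot i)}

/-- The positive roots: roots with non-negative coordinates on the simple roots. -/
def posRoots (π : Representation ℝ W (B → ℝ)) : Set (B → ℝ) :=
  {v ∈ rootSystem π | ∀ i, 0 ≤ v i}

/-- The almost positive roots: positive roots plus negatives of simple roots. -/
def almostPos (π : Representation ℝ W (B → ℝ)) : Set (B → ℝ) :=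
  posRoots π ∪ Set.range (fun i => -sroot i)

variable {M : CoxeterMatrix B}

/-- `l` is a reduced word for `w`. -/
def IsRW (cs : CoxeterSystem M W) (w : W) (l : List B) : Prop :=
  cs.wordProd l = w ∧ l.length = cs.length w

/-- The letter of the infinite word `c^∞` at position `t` (`0`-indexed). -/
def cInf [Nonempty B] (cword : List B) (t : ℕ) : B := cword.getD (t % cword.length) (arb B)

/-- `f ≤ g` in the lexicographic order on sequences of positions. -/
def LexLE {N : ℕ} (f g : Fin N → ℕ) : Prop :=
  f = g ∨ ∃ k, (∀ l, l < k → f l = g l) ∧ f k < g k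

/-- The subword of `Q` indexed by the complement of `I` (positions are `0`-indexed). -/
def complWord [Nonempty B] (Q : List B) (I : Finset ℕ) : List B :=
  ((List.range Q.length).filter (· ∉ I)).map (fun k => Q.getD k (arb B))

/-- `I` is a `c`-cluster of the word `Q`: the complementary subword is a reduced word
for the longest element `w₀`. -/
def IsCluster (cs : CoxeterSystem M W) (w₀ : W) (Q : List B) (I : Finset ℕ) : Prop :=
  I ⊆ Finset.range Q.length ∧ IsRW cs w₀ (complWord Q I)

/-- The root function `r(I, j)`. -/
def rootFn (cs : CoxeterSystem M W) (π : Representation ℝ W (B → ℝ))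
    (Q : List B) (I : Finset ℕ) (j : ℕ) : B → ℝ :=
  π (cs.wordProd (((List.range j).filter (· ∉ I)).map (fun x => Q.getD x (arb B))))
    (sroot (Q.getD j (arb B)))

/-- `ρ` is a family of coefficients expanding `r(I, j)` on the root configuration
`R(I) = (r(I, i))_{i ∈ I}`. -/
def IsExpansion (cs : CoxeterSystem M W) (π : Representation ℝ W (B → ℝ))
    (Q : List B) (I : Finset ℕ) (j : ℕ) (ρ : ℕ → ℝ) : Prop :=
  rootFn cs π Q I j = ∑ i ∈ I, ρ i • rootFn cs π Q I i

/-- The rotation map `τ_c` on positions of the word `Q` (`0`-indexed): the position of the next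
occurrence of the letter `q_i` if it exists, and the first occurrence of `η (q_i) = w₀ q_i w₀`
otherwise. -/
def rot [Nonempty B] (Q : List B) (η : B → B) (i : ℕ) : ℕ :=
  if h : ∃ j, j < Q.length ∧ i < j ∧ Q.getD j (arb B) = Q.getD i (arb B) then Nat.find h
  else if h2 : ∃ j, j < Q.length ∧ Q.getD j (arb B) = η (Q.getD i (arb B)) then Nat.find h2
  else i

/-- The map `ϑ_c` from positions of the word `Q_c = cword ++ sw` to almost positive roots. -/
def theta (cs : CoxeterSystem M W) (π : Representation ℝ W (B → ℝ))
    (cword sw : List B) (i : ℕ) : B → ℝ :=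
  if i < cword.length then -sroot (cword.getD i (arb B))
  else π (cs.wordProd (sw.take (i - cword.length))) (sroot (sw.getD (i - cword.length) (arb B)))

/-- The rotation map `τ_c` on almost positive roots. -/
def rotRoot (cs : CoxeterSystem M W) (π : Representation ℝ W (B → ℝ))
    (cword : List B) (v : B → ℝ) : B → ℝ :=
  if h : ∃ k : Fin cword.length, v = -sroot (cword.get k) then
    π (cs.wordProd (cword.take (Classical.choose h).1)) (sroot (cword.get (Classical.choose h)))
  else if h2 : ∃ k : Fin cword.length,
      v = π (cs.wordProd (cword.drop ((k : ℕ) + 1)).reverse) (sroot (cword.get k)) then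
    -sroot (cword.get (Classical.choose h2))
  else π (cs.wordProd cword) v

/-- One elementary commutation of two consecutive commuting letters. -/
def CommStep (cs : CoxeterSystem M W) (u v : List B) : Prop :=
  ∃ (x y : List B) (s t : B), cs.simple s * cs.simple t = cs.simple t * cs.simple s ∧
    u = x ++ s :: t :: y ∧ v = x ++ t :: s :: y

/-- The cyclic shift on positions accompanying the jump of the first letter of a word with
`m` letters: `σ(k) = k - 1` for `k ≥ 1`, and `σ(0) = m - 1` (positions are `0`-indexed). -/
def shift (m : ℕ) (k : ℕ) : ℕ := if k = 0 then m - 1 else k - 1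


/-! ### Auxiliary lemmas -/

section AuxBil

variable {M : CoxeterMatrix B}

lemma bil_symm (u v : B → ℝ) : bil M u v = bil M v u := by
  unfold bil
  rw [Finset.sum_comm]
  refine Finset.sum_congr rfl fun i _ => Finset.sum_congr rfl fun j _ => ?_
  rw [M.symmetric j i]; ring

lemma bil_sub_left (u u' v : B → ℝ) : bil M (u - u') v = bil M u v - bil M u' v := by
  unfold bil
  rw [← Finset.sum_sub_distrib]
  refine Finset.sum_congr rfl fun i _ => ?_
  rw [← Finset.sum_sub_distrib]
  refine Finset.sum_congr rfl fun j _ => ?_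
  simp [Pi.sub_apply]; ring

lemma bil_sub_right (u v v' : B → ℝ) : bil M u (v - v') = bil M u v - bil M u v' := by
  rw [bil_symm, bil_sub_left, bil_symm v u, bil_symm v' u]

lemma bil_smul_left (r : ℝ) (u v : B → ℝ) : bil M (r • u) v = r * bil M u v := by
  unfold bil
  rw [Finset.mul_sum]
  refine Finset.sum_congr rfl fun i _ => ?_
  rw [Finset.mul_sum]
  refine Finset.sum_congr rfl fun j _ => ?_
  simp [Pi.smul_apply]; ring

lemma bil_smul_right (r : ℝ) (u v : B → ℝ) : bil M u (r • v) = r * bil M u v := by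
  rw [bil_symm, bil_smul_left, bil_symm v u]

lemma bil_sroot_left (i : B) (v : B → ℝ) :
    bil M (sroot i) v = ∑ j, v j * (-(Real.cos (Real.pi / (M i j)))) := by
  unfold bil sroot
  rw [Finset.sum_comm]
  refine Finset.sum_congr rfl fun j _ => ?_
  rw [Finset.sum_eq_single i]
  · simp
  · intro a _ ha; simp [Pi.single_apply, ha]
  · intro h; exact absurd (Finset.mem_univ i) h

lemma bil_sroot_sroot (i j : B) :
    bil M (sroot i) (sroot j) = -(Real.cos (Real.pi / (M i j))) := by
  rw [bil_sroot_left]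
  rw [Finset.sum_eq_single j]
  · simp [sroot]
  · intro a _ ha; simp [sroot, Pi.single_apply, ha]
  · intro h; exact absurd (Finset.mem_univ j) h

lemma bil_sroot_self (i : B) : bil M (sroot i) (sroot i) = 1 := by
  rw [bil_sroot_sroot, M.diagonal]
  simp

variable {W : Type} [Group W]
variable (cs : CoxeterSystem M W) (π : Representation ℝ W (B → ℝ))
variable (hgeom : ∀ (i : B) (v : B → ℝ),
      π (cs.simple i) v = v - (2 * bil M (sroot i) v) • sroot i)

include hgeom

lemma bil_simple_invariant (i : B) (u v : B → ℝ) :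
    bil M (π (cs.simple i) u) (π (cs.simple i) v) = bil M u v := by
  rw [hgeom, hgeom]
  simp only [bil_sub_left, bil_sub_right, bil_smul_left, bil_smul_right, bil_sroot_self]
  rw [bil_symm u (sroot i)]; ring

lemma bil_invariant (w : W) (u v : B → ℝ) :
    bil M (π w u) (π w v) = bil M u v := by
  obtain ⟨l, rfl⟩ := cs.wordProd_surjective w
  induction l generalizing u v with
  | nil => simp [CoxeterSystem.wordProd_nil]
  | cons a l ih =>
    rw [cs.wordProd_cons, map_mul]
    simp only [Module.End.mul_apply]
    rw [bil_simple_invariant cs π hgeom, ih]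

lemma pi_simple_sroot_self (i : B) : π (cs.simple i) (sroot i) = -sroot i := by
  rw [hgeom, bil_sroot_self]
  ext j; simp [Pi.sub_apply]; ring

omit hgeom in
lemma pi_simple_sq (i : B) (v : B → ℝ) :
    π (cs.simple i) (π (cs.simple i) v) = v := by
  rw [← Module.End.mul_apply, ← map_mul, cs.simple_mul_simple_self, map_one, Module.End.one_apply]

lemma rank2_formula (i t : B) (hm : 2 ≤ M i t) (k : ℕ) :
    π (cs.wordProd (CoxeterSystem.alternatingWord i t k)) (sroot i)
      = (Real.sin ((if Even k then (k:ℝ)+1 else (k:ℝ)) * (Real.pi / (M i t)))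
          / Real.sin (Real.pi / (M i t))) • sroot i
        + (Real.sin ((if Even k then (k:ℝ) else (k:ℝ)+1) * (Real.pi / (M i t)))
          / Real.sin (Real.pi / (M i t))) • sroot t := by
  set θ : ℝ := Real.pi / (M i t) with hθdef
  have hm1 : (1:ℝ) < (M i t : ℝ) := by exact_mod_cast lt_of_lt_of_le one_lt_two hm
  have hθpos : 0 < θ := div_pos Real.pi_pos (lt_trans one_pos hm1)
  have hθlt : θ < Real.pi := div_lt_self Real.pi_pos hm1
  have hsin : 0 < Real.sin θ := Real.sin_pos_of_pos_of_lt_pi hθpos hθlt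
  have hti : π (cs.simple t) (sroot i) = sroot i + (2 * Real.cos θ) • sroot t := by
    rw [hgeom, bil_sroot_sroot, M.symmetric t i, sub_eq_add_neg, ← neg_smul]
    congr 1; rw [hθdef]; congr 1; ring
  have hit : π (cs.simple i) (sroot t) = sroot t + (2 * Real.cos θ) • sroot i := by
    rw [hgeom, bil_sroot_sroot, sub_eq_add_neg, ← neg_smul]
    congr 1; rw [hθdef]; congr 1; ring
  have hii : π (cs.simple i) (sroot i) = -sroot i := pi_simple_sroot_self cs π hgeom i
  have htt : π (cs.simple t) (sroot t) = -sroot t := pi_simple_sroot_self cs π hgeom t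
  induction k with
  | zero =>
    simp only [CoxeterSystem.alternatingWord, cs.wordProd_nil, map_one, Module.End.one_apply]
    norm_num
    rw [div_self hsin.ne']
    ext j; simp
  | succ k ih =>
    rw [CoxeterSystem.alternatingWord_succ', cs.wordProd_cons, map_mul, Module.End.mul_apply, ih]
    have key : ∀ x : ℝ, Real.sin ((x+2) * θ)
        = 2 * Real.cos θ * Real.sin ((x+1) * θ) - Real.sin (x * θ) := by
      intro x
      have h1 : (x+2)*θ = (x+1)*θ + θ := by ring
      have h2 : x*θ = (x+1)*θ - θ := by ring
      rw [h1, Real.sin_add, h2, Real.sin_sub]; ring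
    by_cases hk : Even k
    · have hk' : ¬ Even (k+1) := by simp [Nat.even_add_one, hk]
      simp only [hk, hk', if_true, if_false, if_pos, if_neg, not_false_iff]
      push_cast
      rw [map_add, map_smul, map_smul, hti, htt]
      have key2 : Real.sin (((k:ℝ)+1+1)*θ)/Real.sin θ
          = 2*Real.cos θ * (Real.sin (((k:ℝ)+1)*θ)/Real.sin θ)
            - Real.sin ((k:ℝ)*θ)/Real.sin θ := by
        have := key (k:ℝ)
        rw [show ((k:ℝ)+1+1) = (k:ℝ)+2 by ring, this]; ring
      rw [key2]
      module
    · have hk' : Even (k+1) := by simpa [Nat.even_add_one] using hk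
      simp only [hk, hk', if_true, if_false]
      push_cast
      rw [map_add, map_smul, map_smul, hit, hii]
      have key2 : Real.sin (((k:ℝ)+1+1)*θ)/Real.sin θ
          = 2*Real.cos θ * (Real.sin (((k:ℝ)+1)*θ)/Real.sin θ)
            - Real.sin ((k:ℝ)*θ)/Real.sin θ := by
        have := key (k:ℝ)
        rw [show ((k:ℝ)+1+1) = (k:ℝ)+2 by ring, this]; ring
      rw [key2]
      module

lemma rank2 (i t : B) (hm : 2 ≤ M i t) (k : ℕ) (hk : k + 1 ≤ M i t) :
    ∃ a b : ℝ, 0 ≤ a ∧ 0 ≤ b ∧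
      π (cs.wordProd (CoxeterSystem.alternatingWord i t k)) (sroot i)
        = a • sroot i + b • sroot t := by
  set θ : ℝ := Real.pi / (M i t) with hθdef
  have hm1 : (1:ℝ) < (M i t : ℝ) := by exact_mod_cast lt_of_lt_of_le one_lt_two hm
  have hθpos : 0 < θ := div_pos Real.pi_pos (lt_trans one_pos hm1)
  have hθlt : θ < Real.pi := div_lt_self Real.pi_pos hm1
  have hsin : 0 < Real.sin θ := Real.sin_pos_of_pos_of_lt_pi hθpos hθlt
  have hnn : ∀ j : ℕ, (j : ℝ) ≤ (M i t : ℝ) → 0 ≤ Real.sin ((j:ℝ) * θ) / Real.sin θ := by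
    intro j hj
    apply div_nonneg _ hsin.le
    apply Real.sin_nonneg_of_nonneg_of_le_pi
    · positivity
    · rw [hθdef, ← mul_div_assoc, div_le_iff₀ (lt_trans one_pos hm1)]
      nlinarith [Real.pi_pos]
  have hkr : ((k:ℝ)+1) ≤ (M i t : ℝ) := by exact_mod_cast hk
  have hkr0 : ((k:ℝ)) ≤ (M i t : ℝ) := by linarith
  have form := rank2_formula cs π hgeom i t hm k
  by_cases hke : Even k
  · rw [if_pos hke, if_pos hke] at form
    refine ⟨_, _, ?_, ?_, form⟩
    · have := hnn (k+1) (by push_cast; linarith)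
      push_cast at this ⊢; exact this
    · exact hnn k hkr0
  · rw [if_neg hke, if_neg hke] at form
    refine ⟨_, _, ?_, ?_, form⟩
    · exact hnn k hkr0
    · have := hnn (k+1) (by push_cast; linarith)
      push_cast at this ⊢; exact this

omit hgeom in
lemma lemP (i t : B) : ∀ n (w : W), cs.length w = n →
    ∃ (u : W) (l : List B), (∀ x ∈ l, x = i ∨ x = t) ∧ w = u * cs.wordProd l ∧
      cs.length w = cs.length u + l.length ∧
      ¬ cs.IsRightDescent u i ∧ ¬ cs.IsRightDescent u t := by
  intro n
  induction n using Nat.strong_induction_on with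
  | _ n ih =>
    intro w hw
    have step : ∀ y : B, (y = i ∨ y = t) → cs.IsRightDescent w y →
        (∃ (u : W) (l : List B), (∀ x ∈ l, x = i ∨ x = t) ∧ w = u * cs.wordProd l ∧
          cs.length w = cs.length u + l.length ∧
          ¬ cs.IsRightDescent u i ∧ ¬ cs.IsRightDescent u t) := by
      intro y hy hdes
      have hlt : cs.length (w * cs.simple y) < n := by rw [← hw]; exact hdes
      obtain ⟨u, l, hmem, hprod, hlen, hdi, hdt⟩ := ih _ hlt (w * cs.simple y) rfl
      refine ⟨u, l ++ [y], ?_, ?_, ?_, hdi, hdt⟩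
      · intro x hx
        rcases List.mem_append.mp hx with h | h
        · exact hmem x h
        · simp at h; subst h; exact hy
      · rw [cs.wordProd_append, cs.wordProd_singleton, ← mul_assoc, ← hprod]
        rw [mul_assoc, cs.simple_mul_simple_self, mul_one]
      · have h1 : cs.length (w * cs.simple y) + 1 = cs.length w := by
          rcases cs.length_mul_simple w y with h | h
          · exfalso
            have := hdes
            unfold CoxeterSystem.IsRightDescent at this
            omega
          · exact h
        simp only [List.length_append, List.length_singleton]
        omega
    by_cases hi : cs.IsRightDescent w i
    · exact step i (Or.inl rfl) hi
    · by_cases ht : cs.IsRightDescent w t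
      · exact step t (Or.inr rfl) ht
      · exact ⟨w, [], by simp, by simp, by simp, hi, ht⟩

omit hgeom in
lemma chain'_of_reduced (l : List B) (h : cs.IsReduced l) : l.Chain' (· ≠ ·) := by
  by_contra hc
  simp only [List.Chain', List.isChain_iff_getElem] at hc
  push_neg at hc
  obtain ⟨n, hn, heq⟩ := hc
  have heq : l.get ⟨n, by omega⟩ = l.get ⟨n + 1, hn⟩ := heq
  have hlen : n + 1 < l.length := by omega
  have hn' : n < l.length := by omega
  have hd1 : l.drop n = l.get ⟨n, hn'⟩ :: l.drop (n+1) := by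
    rw [List.drop_eq_getElem_cons hn']; rfl
  have hd2 : l.drop (n+1) = l.get ⟨n+1, hlen⟩ :: l.drop (n+2) := by
    rw [List.drop_eq_getElem_cons hlen]; rfl
  have hsplit : cs.wordProd l = cs.wordProd (l.take n) * cs.wordProd (l.drop n) := by
    rw [← cs.wordProd_append, List.take_append_drop]
  rw [hd1, hd2, ← heq, cs.wordProd_cons, cs.wordProd_cons,
    cs.simple_mul_simple_cancel_left, ← cs.wordProd_append] at hsplit
  have hle := cs.length_wordProd_le (l.take n ++ l.drop (n + 2))
  rw [← hsplit] at hle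
  unfold CoxeterSystem.IsReduced at h
  rw [h] at hle
  rw [List.length_append, List.length_take, List.length_drop] at hle
  omega

lemma alt_id : ∀ (l : List B) (i t : B), (∀ x ∈ l, x = i ∨ x = t) →
    l.Chain' (· ≠ ·) → (l = [] ∨ l.getLast? = some t) →
    l = CoxeterSystem.alternatingWord i t l.length := by
  intro l
  induction l using List.reverseRecOn with
  | nil => intro i t _ _ _; rfl
  | append_singleton l₂ x ih =>
    intro i t hmem hchain hlast
    have hx : x = t := by
      rcases hlast with h | h
      · simp at h
      · rw [List.getLast?_concat] at h
        exact Option.some_injective _ h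
    subst hx
    obtain ⟨hc₂, -, hlastne⟩ := List.isChain_append.mp hchain
    have hmem₂ : ∀ y ∈ l₂, y = x ∨ y = i := fun y hy => (hmem y (by simp [hy])).symm
    have hend₂ : l₂ = [] ∨ l₂.getLast? = some i := by
      rcases List.eq_nil_or_concat' l₂ with h | ⟨L, c, rfl⟩
      · exact Or.inl h
      · right
        rw [List.getLast?_concat]
        have hc : c = x ∨ c = i := hmem₂ c (by simp)
        have hne : c ≠ x := by
          have := hlastne c (by rw [List.getLast?_concat]; rfl) x (by rfl)
          exact this
        rcases hc with h | h
        · exact absurd h hne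
        · rw [h]
    have hrec := ih x i hmem₂ hc₂ hend₂
    conv_lhs => rw [hrec]
    rw [List.length_append, List.length_singleton, CoxeterSystem.alternatingWord_succ]
    simp [List.concat_eq_append]

theorem posRoot (hcrys : ∀ i j : B, i ≠ j → M i j ∈ ({2, 3, 4, 6} : Set ℕ)) :
    ∀ n (w : W), cs.length w = n → ∀ i : B, ¬ cs.IsRightDescent w i →
      ∀ j, 0 ≤ π w (sroot i) j := by
  intro n
  induction n using Nat.strong_induction_on with
  | _ n ih =>
    intro w hw i hdi j
    rcases Nat.eq_zero_or_pos n with h0 | hpos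
    · subst h0
      have hw1 : w = 1 := cs.length_eq_zero_iff.mp hw
      subst hw1
      rw [map_one, Module.End.one_apply, sroot, Pi.single_apply]
      split <;> norm_num
    · have hne : w ≠ 1 := by
        intro h; subst h; rw [cs.length_one] at hw; omega
      obtain ⟨t, hdt⟩ := cs.exists_rightDescent_of_ne_one hne
      have hit : i ≠ t := fun h => hdi (h ▸ hdt)
      obtain ⟨u, l, hmem, hprod, hlen, hui, hut⟩ := lemP cs i t (cs.length w) w rfl
      have hlne : l ≠ [] := by
        rintro rfl
        rw [cs.wordProd_nil, mul_one] at hprod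
        exact hut (hprod ▸ hdt)
      have hred : cs.IsReduced l := by
        have h1 := cs.length_mul_le u (cs.wordProd l)
        have h2 := cs.length_wordProd_le l
        rw [← hprod] at h1
        unfold CoxeterSystem.IsReduced
        omega
      have hchain := chain'_of_reduced cs l hred
      obtain ⟨l₂, x, hlx⟩ := (List.eq_nil_or_concat' l).resolve_left hlne
      have hnotend_i : ∀ (l₃ : List B), l = l₃ ++ [i] → False := by
        intro l₃ hli
        have hws : w * cs.simple i = u * cs.wordProd l₃ := by
          rw [hprod, hli, cs.wordProd_append, cs.wordProd_singleton]
          rw [mul_assoc, mul_assoc, cs.simple_mul_simple_self, mul_one]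
        have hlt : cs.length (w * cs.simple i) < cs.length w := by
          have h1 := cs.length_mul_le u (cs.wordProd l₃)
          have h2 := cs.length_wordProd_le l₃
          rw [← hws] at h1
          have h3 : l.length = l₃.length + 1 := by rw [hli]; simp
          omega
        exact hdi hlt
      have hx : x = t := by
        rcases hmem x (by rw [hlx]; simp) with h | h
        · exfalso
          exact hnotend_i l₂ (by rw [hlx, h])
        · exact h
      have hlast : l.getLast? = some t := by rw [hlx, hx, List.getLast?_concat]
      have hlid := alt_id cs π hgeom l i t hmem hchain (Or.inr hlast)
      have hM := hcrys i t hit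
      simp only [Set.mem_insert_iff, Set.mem_singleton_iff] at hM
      have hm2 : 2 ≤ M i t := by rcases hM with h|h|h|h <;> omega
      have hM0 : M i t ≠ 0 := by omega
      have hbd1 : l.length ≤ M i t := by
        by_contra hgt
        push_neg at hgt
        have hnr := cs.not_isReduced_alternatingWord i t hM0 hgt
        rw [← hlid] at hnr
        exact hnr hred
      have hbd2 : l.length ≠ M i t := by
        intro he
        obtain ⟨d, hd⟩ : ∃ d, M i t = d + 1 := ⟨M i t - 1, by omega⟩
        have hbraid : cs.wordProd l
            = cs.wordProd (CoxeterSystem.alternatingWord t i (M i t)) := by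
          have hbw := cs.wordProd_braidWord_eq i t
          unfold CoxeterSystem.braidWord at hbw
          rw [M.symmetric t i] at hbw
          rw [hlid, he]
          exact hbw
        have halt : CoxeterSystem.alternatingWord t i (M i t)
            = (CoxeterSystem.alternatingWord i t d).concat i := by
          rw [hd, CoxeterSystem.alternatingWord_succ]
        have hws : w * cs.simple i
            = u * cs.wordProd (CoxeterSystem.alternatingWord i t d) := by
          rw [hprod, hbraid, halt, cs.wordProd_concat]
          rw [mul_assoc, mul_assoc, cs.simple_mul_simple_self, mul_one]
        have hlt : cs.length (w * cs.simple i) < cs.length w := by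
          have h1 := cs.length_mul_le u
            (cs.wordProd (CoxeterSystem.alternatingWord i t d))
          have h2 := cs.length_wordProd_le (CoxeterSystem.alternatingWord i t d)
          rw [CoxeterSystem.length_alternatingWord] at h2
          rw [← hws] at h1
          omega
        exact hdi hlt
      have hkm : l.length + 1 ≤ M i t := by omega
      obtain ⟨a, b2, ha, hb2', hform⟩ := rank2 cs π hgeom i t hm2 l.length hkm
      have hllen : 0 < l.length := List.length_pos_iff.mpr hlne
      have hulen : cs.length u < n := by omega
      have hiu := ih _ hulen u rfl i hui
      have htu := ih _ hulen u rfl t hut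
      rw [← hlid] at hform
      rw [hprod, map_mul, Module.End.mul_apply, hform, map_add, map_smul, map_smul]
      simp only [Pi.add_apply, Pi.smul_apply, smul_eq_mul]
      exact add_nonneg (mul_nonneg ha (hiu j)) (mul_nonneg hb2' (htu j))

lemma crux (hcrys : ∀ i j : B, i ≠ j → M i j ∈ ({2, 3, 4, 6} : Set ℕ))
    (w₀ : W)
    (hw₀max : ∀ w : W, cs.length w ≤ cs.length w₀)
    (hw₀uniq : ∀ w : W, cs.length w = cs.length w₀ → w = w₀)
    (s b : B) (hb : cs.simple b = w₀ * cs.simple s * w₀) :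
    π w₀ (sroot b) = -sroot s := by
  have hw0inv : w₀⁻¹ = w₀ := hw₀uniq _ (cs.length_inv w₀)
  have hw0sq : w₀ * w₀ = 1 := by
    nth_rewrite 1 [← hw0inv]
    exact inv_mul_cancel w₀
  have hsw : cs.simple s * w₀ = w₀ * cs.simple b := by
    rw [hb, ← mul_assoc, ← mul_assoc, hw0sq, one_mul]
  set v := π w₀ (sroot b) with hv
  have hαb : π (cs.simple b) (sroot b) = -sroot b := pi_simple_sroot_self cs π hgeom b
  have h1 : π (cs.simple s) v = -v := by
    rw [hv, ← Module.End.mul_apply, ← map_mul, hsw, map_mul, Module.End.mul_apply, hαb, map_neg]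
  set lam := bil M (sroot s) v with hlam
  have h2 : v = lam • sroot s := by
    have h3 := hgeom s v
    rw [h1] at h3
    funext j
    have h5 := congrFun h3 j
    simp only [Pi.neg_apply, Pi.sub_apply, Pi.smul_apply, smul_eq_mul] at h5
    simp only [Pi.smul_apply, smul_eq_mul]
    linarith
  have hnorm : bil M v v = 1 := by
    rw [hv, bil_invariant cs π hgeom, bil_sroot_self]
  have hsq : lam * lam = 1 := by
    rw [h2, bil_smul_left, bil_smul_right, bil_sroot_self, mul_one] at hnorm
    exact hnorm
  have hdes : cs.length (w₀ * cs.simple b) + 1 = cs.length w₀ := by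
    rcases cs.length_mul_simple w₀ b with h | h
    · exfalso; have := hw₀max (w₀ * cs.simple b); omega
    · exact h
  have hnd : ¬ cs.IsRightDescent (w₀ * cs.simple b) b := by
    unfold CoxeterSystem.IsRightDescent
    rw [mul_assoc, cs.simple_mul_simple_self, mul_one]
    omega
  have hpos := posRoot cs π hgeom hcrys (cs.length (w₀ * cs.simple b)) _ rfl b hnd
  have h6 : v = - π (w₀ * cs.simple b) (sroot b) := by
    rw [hv]
    conv_lhs => rw [show w₀ = (w₀ * cs.simple b) * cs.simple b by
      rw [mul_assoc, cs.simple_mul_simple_self, mul_one]]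
    rw [map_mul, Module.End.mul_apply, hαb, map_neg]
  have hneg : ∀ j, v j ≤ 0 := by
    intro j
    have := hpos j
    rw [h6]
    simp only [Pi.neg_apply]
    linarith
  have hlv : lam ≤ 0 := by
    have h7 := hneg s
    rw [h2] at h7
    simp only [Pi.smul_apply, smul_eq_mul, sroot, Pi.single_apply] at h7
    simpa using h7
  have hlam1 : lam = -1 := by nlinarith
  rw [h2, hlam1, neg_smul, one_smul]

end AuxBil

section AuxList

lemma mem_image_shift {I : Finset ℕ} {m : ℕ} (hIm : ∀ y ∈ I, y < m) {x : ℕ} (hx : x < m - 1) :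
    x ∈ I.image (shift m) ↔ x + 1 ∈ I := by
  simp only [Finset.mem_image]
  constructor
  · rintro ⟨y, hy, hyx⟩
    unfold shift at hyx
    by_cases hy0 : y = 0
    · subst hy0; rw [if_pos rfl] at hyx; omega
    · rw [if_neg hy0] at hyx
      have hy' := hIm y hy
      have : y = x + 1 := by omega
      rwa [← this]
  · intro h
    refine ⟨x + 1, h, ?_⟩
    unfold shift
    rw [if_neg (by omega)]
    omega

lemma filter_shift (s b : B) (T : List B) (I : Finset ℕ) (hIm : ∀ y ∈ I, y < T.length + 1) :
    ∀ j, j ≤ T.length →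
    ((List.range j).filter (fun x => x ∉ I.image (shift (T.length + 1)))).map
        (fun x => (T ++ [b]).getD x (arb B))
    = ((List.range (j+1)).filter (fun x => x ∉ I ∧ x ≠ 0)).map
        (fun x => (s :: T).getD x (arb B)) := by
  intro j
  induction j with
  | zero =>
    intro _
    simp [List.filter_singleton]
  | succ j ih =>
    intro hj
    rw [List.range_succ, List.filter_append, List.map_append]
    rw [List.range_succ (n := j+1), List.filter_append, List.map_append]
    rw [ih (by omega)]
    congr 1
    have hxlt : j < T.length + 1 - 1 := by omega
    by_cases hmem : (j+1) ∈ I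
    · have h1 : j ∈ I.image (shift (T.length + 1)) := (mem_image_shift hIm hxlt).mpr hmem
      simp only [List.filter_singleton, Bool.cond_decide]
      rw [if_neg (by simpa using h1), if_neg (by simp [hmem])]
      rfl
    · have h1 : j ∉ I.image (shift (T.length + 1)) := fun hc =>
        hmem ((mem_image_shift hIm hxlt).mp hc)
      simp only [List.filter_singleton, Bool.cond_decide]
      rw [if_pos (by simpa using h1), if_pos (by simp [hmem])]
      simp only [List.map_singleton, List.cons.injEq, and_true]
      rw [List.getD_append _ _ _ _ (by omega)]
      rfl

lemma filter_and_ne_of_mem (I : Finset ℕ) (h0 : 0 ∈ I) (n : ℕ) :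
    (List.range n).filter (fun x => x ∉ I ∧ x ≠ 0)
      = (List.range n).filter (fun x => x ∉ I) := by
  apply List.filter_congr
  intro x _
  simp only [decide_eq_decide]
  constructor
  · exact fun h => h.1
  · intro h
    exact ⟨h, fun hx => h (hx ▸ h0)⟩

lemma filter_cons_zero (I : Finset ℕ) (h0 : 0 ∉ I) (n : ℕ) :
    (List.range (n+1)).filter (fun x => x ∉ I)
      = 0 :: (List.range (n+1)).filter (fun x => x ∉ I ∧ x ≠ 0) := by
  rw [List.range_succ_eq_map, List.filter_cons_of_pos (by simpa using h0),
    List.filter_cons_of_neg (by simp)]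
  congr 1
  apply List.filter_congr
  intro x hx
  simp only [List.mem_map] at hx
  obtain ⟨y, _, rfl⟩ := hx
  simp only [decide_eq_decide]
  constructor
  · exact fun h => ⟨h, by omega⟩
  · exact fun h => h.1

end AuxList

theorem statement_11
    {B : Type} [DecidableEq B] [Fintype B] [Nonempty B]
    {M : CoxeterMatrix B} {W : Type} [Group W] [Finite W]
    (cs : CoxeterSystem M W)
    (hcrys : ∀ i j : B, i ≠ j → M i j ∈ ({2, 3, 4, 6} : Set ℕ))
    (π : Representation ℝ W (B → ℝ))
    (hgeom : ∀ (i : B) (v : B → ℝ),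
      π (cs.simple i) v = v - (2 * bil M (sroot i) v) • sroot i)
    (w₀ : W)
    (hw₀max : ∀ w : W, cs.length w ≤ cs.length w₀)
    (hw₀uniq : ∀ w : W, cs.length w = cs.length w₀ → w = w₀)
    (s : B) (ctail : List B)
    (hcnodup : (s :: ctail).Nodup) (hcfull : ∀ i : B, i ∈ s :: ctail)
    (sw : List B) (hsw : IsRW cs w₀ sw)
    (pos : Fin sw.length → ℕ) (hposmono : StrictMono pos)
    (hposlet : ∀ k : Fin sw.length, sw.get k = cInf (s :: ctail) (pos k))
    (hposlex : ∀ g : Fin sw.length → ℕ, StrictMono g →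
      IsRW cs w₀ (List.ofFn fun k => cInf (s :: ctail) (g k)) → LexLE pos g)
    (b : B) (hb : cs.simple b = w₀ * cs.simple s * w₀)
    (I : Finset ℕ) (hI : IsCluster cs w₀ ((s :: ctail) ++ sw) I) :
    ∀ k : ℕ, k < ((s :: ctail) ++ sw).length →
      ((k = 0 → 0 ∈ I →
        rootFn cs π ((ctail ++ sw) ++ [b]) (I.image (shift ((s :: ctail) ++ sw).length)) (shift ((s :: ctail) ++ sw).length k) = -rootFn cs π ((s :: ctail) ++ sw) I k) ∧
      (k = 0 → 0 ∉ I →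
        rootFn cs π ((ctail ++ sw) ++ [b]) (I.image (shift ((s :: ctail) ++ sw).length)) (shift ((s :: ctail) ++ sw).length k) = rootFn cs π ((s :: ctail) ++ sw) I k) ∧
      (k ≠ 0 → 0 ∈ I →
        rootFn cs π ((ctail ++ sw) ++ [b]) (I.image (shift ((s :: ctail) ++ sw).length)) (shift ((s :: ctail) ++ sw).length k) = rootFn cs π ((s :: ctail) ++ sw) I k) ∧
      (k ≠ 0 → 0 ∉ I →
        rootFn cs π ((ctail ++ sw) ++ [b]) (I.image (shift ((s :: ctail) ++ sw).length)) (shift ((s :: ctail) ++ sw).length k) = π (cs.simple s) (rootFn cs π ((s :: ctail) ++ sw) I k))) := by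
  have hQcons : (s :: ctail) ++ sw = s :: (ctail ++ sw) := rfl
  rw [hQcons] at hI ⊢
  set T := ctail ++ sw with hT
  simp only [List.length_cons] at hI ⊢
  intro k hk
  have hIm : ∀ y ∈ I, y < T.length + 1 := by
    intro y hy
    have := hI.1 hy
    simpa using this
  have hshift0 : shift (T.length + 1) 0 = T.length := by unfold shift; simp
  have hgetb : (T ++ [b]).getD T.length (arb B) = b := by
    rw [List.getD_append_right _ _ _ _ (le_refl _)]
    simp
  have hword0 := filter_shift s b T I hIm T.length (le_refl _)
  refine ⟨?_, ?_, ?_, ?_⟩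
  · -- k = 0, 0 ∈ I
    intro hk0 h0I
    subst hk0
    have hXw : cs.wordProd (((List.range (T.length+1)).filter (fun x => x ∉ I)).map
        (fun x => (s :: T).getD x (arb B))) = w₀ := by
      have h := hI.2.1
      unfold complWord at h
      simpa using h
    rw [hshift0]
    unfold rootFn
    rw [hword0, hgetb, filter_and_ne_of_mem I h0I, hXw,
      crux cs π hgeom hcrys w₀ hw₀max hw₀uniq s b hb]
    simp [cs.wordProd_nil]
  · -- k = 0, 0 ∉ I
    intro hk0 h0I
    subst hk0
    have hY : cs.wordProd (((List.range (T.length+1)).filter (fun x => x ∉ I ∧ x ≠ 0)).map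
        (fun x => (s :: T).getD x (arb B))) = cs.simple s * w₀ := by
      have h := hI.2.1
      unfold complWord at h
      simp only [List.length_cons] at h
      rw [filter_cons_zero I h0I, List.map_cons, cs.wordProd_cons] at h
      simp only [List.getD_cons_zero] at h
      rw [← h, cs.simple_mul_simple_cancel_left]
    rw [hshift0]
    unfold rootFn
    rw [hword0, hgetb, hY, map_mul, Module.End.mul_apply,
      crux cs π hgeom hcrys w₀ hw₀max hw₀uniq s b hb, map_neg,
      pi_simple_sroot_self cs π hgeom s, neg_neg]
    simp [cs.wordProd_nil]
  · -- k ≠ 0, 0 ∈ I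
    intro hkne h0I
    obtain ⟨k', rfl⟩ : ∃ k', k = k' + 1 := ⟨k - 1, by omega⟩
    have hshiftS : shift (T.length + 1) (k' + 1) = k' := by unfold shift; simp
    have hword := filter_shift s b T I hIm k' (by omega)
    have hget : (T ++ [b]).getD k' (arb B) = (s :: T).getD (k' + 1) (arb B) := by
      rw [List.getD_append _ _ _ _ (by omega)]
      rfl
    rw [hshiftS]
    unfold rootFn
    rw [hword, hget, filter_and_ne_of_mem I h0I]
  · -- k ≠ 0, 0 ∉ I
    intro hkne h0I
    obtain ⟨k', rfl⟩ : ∃ k', k = k' + 1 := ⟨k - 1, by omega⟩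
    have hshiftS : shift (T.length + 1) (k' + 1) = k' := by unfold shift; simp
    have hword := filter_shift s b T I hIm k' (by omega)
    have hget : (T ++ [b]).getD k' (arb B) = (s :: T).getD (k' + 1) (arb B) := by
      rw [List.getD_append _ _ _ _ (by omega)]
      rfl
    rw [hshiftS]
    unfold rootFn
    rw [hword, hget, filter_cons_zero I h0I k', List.map_cons, cs.wordProd_cons,
      List.getD_cons_zero, map_mul, Module.End.mul_apply, pi_simple_sq]


end CP
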